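/- arXiv:1810.06398 — 8 statements merged into one kernel-verified Lean document; each statement's English description precedes it below -/
import Mathlib

section
/- In any lattice L, if two vectors x, y ∈ L^n are comonotone, then they are dually generalized comonotone, i.e., for all i,j: (x_i ∧ y_i) ∨ (x_j ∧ y_j) = (x_i ∨ x_j) ∧ (y_i ∨ y_j). -/
theorem comonotone_implies_dual_gcomonotone {L : Type*} [Lattice L] {n : ℕ}
    (x y : Fin n → L)
    (hcom : ∀ i j : Fin n, (x i ≤ x j ∧ y i ≤ y j) ∨ (x j ≤ x i ∧ y j ≤ y i)) :
    ∀ i j : Fin n, (x i ⊓ y i) ⊔ (x j ⊓ y j) = (x i ⊔ x j) ⊓ (y i ⊔ y j) := by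
  intro i j
  rcases hcom i j with ⟨hx, hy⟩ | ⟨hx, hy⟩
  · rw [sup_eq_right.2 (inf_le_inf hx hy), sup_eq_right.2 hx, sup_eq_right.2 hy]
  · rw [sup_eq_left.2 (inf_le_inf hx hy), sup_eq_left.2 hx, sup_eq_left.2 hy]
end

section
/- On any distributive lattice L, generalized comonotonicity is self-dual: two vectors x, y ∈ L^n are g-comonotone (for all i,j: (x_i ∨ y_i) ∧ (x_j ∨ y_j) = (x_i ∧ x_j) ∨ (y_i ∧ y_j)) if and only if they are dually g-comonotone (for all i,j: (x_i ∧ y_i) ∨ (x_j ∧ y_j) = (x_i ∨ x_j) ∧ (y_i ∨ y_j)). -/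
lemma gcomo_expand {L : Type*} [DistribLattice L] (a b c d : L) :
    (a ⊔ b) ⊓ (c ⊔ d) = ((a ⊓ c) ⊔ (a ⊓ d)) ⊔ ((b ⊓ c) ⊔ (b ⊓ d)) := by
  rw [inf_sup_right, inf_sup_left, inf_sup_left]

lemma gcomo_absorb {L : Type*} [DistribLattice L] {a d u v w z : L}
    (h : a ⊓ d ≤ u ⊔ v) (h1 : a ⊓ d ⊓ u ≤ w) (h2 : a ⊓ d ⊓ v ≤ z) :
    a ⊓ d ≤ w ⊔ z := by
  calc a ⊓ d = (a ⊓ d) ⊓ (u ⊔ v) := (inf_eq_left.mpr h).symm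
    _ = (a ⊓ d ⊓ u) ⊔ (a ⊓ d ⊓ v) := inf_sup_left _ _ _
    _ ≤ w ⊔ z := sup_le_sup h1 h2

theorem gcomonotone_selfdual {L : Type*} [DistribLattice L] {n : ℕ}
    (x y : Fin n → L) :
    (∀ i j : Fin n, (x i ⊔ y i) ⊓ (x j ⊔ y j) = (x i ⊓ x j) ⊔ (y i ⊓ y j)) ↔
    (∀ i j : Fin n, (x i ⊓ y i) ⊔ (x j ⊓ y j) = (x i ⊔ x j) ⊓ (y i ⊔ y j)) := by
  constructor
  · intro h i j
    set a := x i; set b := y i; set c := x j; set d := y j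
    have hij : (a ⊔ b) ⊓ (c ⊔ d) = (a ⊓ c) ⊔ (b ⊓ d) := h i j
    have had : a ⊓ d ≤ (a ⊓ b) ⊔ (c ⊓ d) := by
      rw [sup_comm]
      refine gcomo_absorb ((le_inf (inf_le_left.trans le_sup_left) (inf_le_right.trans le_sup_right)).trans hij.le) ?_ ?_
      · solve_by_elim (maxDepth := 8) [le_inf, inf_le_of_left_le, inf_le_of_right_le, inf_le_left, inf_le_right, le_refl]
      · solve_by_elim (maxDepth := 8) [le_inf, inf_le_of_left_le, inf_le_of_right_le, inf_le_left, inf_le_right, le_refl]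
    have hcb : c ⊓ b ≤ (a ⊓ b) ⊔ (c ⊓ d) := by
      refine gcomo_absorb ((le_inf (inf_le_right.trans le_sup_right) (inf_le_left.trans le_sup_left)).trans hij.le) ?_ ?_
      · solve_by_elim (maxDepth := 8) [le_inf, inf_le_of_left_le, inf_le_of_right_le, inf_le_left, inf_le_right, le_refl]
      · solve_by_elim (maxDepth := 8) [le_inf, inf_le_of_left_le, inf_le_of_right_le, inf_le_left, inf_le_right, le_refl]
    refine le_antisymm (sup_le (inf_le_inf le_sup_left le_sup_left)
      (inf_le_inf le_sup_right le_sup_right)) ?_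
    rw [gcomo_expand]
    exact sup_le (sup_le le_sup_left had) (sup_le hcb le_sup_right)
  · intro h i j
    set a := x i; set b := y i; set c := x j; set d := y j
    have hij : (a ⊓ b) ⊔ (c ⊓ d) = (a ⊔ c) ⊓ (b ⊔ d) := h i j
    have had : a ⊓ d ≤ (a ⊓ c) ⊔ (b ⊓ d) := by
      rw [sup_comm]
      refine gcomo_absorb ((le_inf (inf_le_left.trans le_sup_left) (inf_le_right.trans le_sup_right)).trans hij.ge) ?_ ?_
      · solve_by_elim (maxDepth := 8) [le_inf, inf_le_of_left_le, inf_le_of_right_le, inf_le_left, inf_le_right, le_refl]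
      · solve_by_elim (maxDepth := 8) [le_inf, inf_le_of_left_le, inf_le_of_right_le, inf_le_left, inf_le_right, le_refl]
    have hbc : b ⊓ c ≤ (a ⊓ c) ⊔ (b ⊓ d) := by
      refine gcomo_absorb ((le_inf (inf_le_right.trans le_sup_right) (inf_le_left.trans le_sup_left)).trans hij.ge) ?_ ?_
      · solve_by_elim (maxDepth := 8) [le_inf, inf_le_of_left_le, inf_le_of_right_le, inf_le_left, inf_le_right, le_refl]
      · solve_by_elim (maxDepth := 8) [le_inf, inf_le_of_left_le, inf_le_of_right_le, inf_le_left, inf_le_right, le_refl]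
    refine le_antisymm ?_ (sup_le (inf_le_inf le_sup_left le_sup_left)
      (inf_le_inf le_sup_right le_sup_right))
    rw [gcomo_expand]
    exact sup_le (sup_le le_sup_left had) (sup_le hbc le_sup_right)
end

section
/- Let a, b, c, d be elements of a distributive lattice satisfying (a ∨ c) ∧ (b ∨ d) = (a ∧ b) ∨ (c ∧ d). Then (a ∧ c) ∨ (b ∧ d) = (a ∨ b) ∧ (c ∨ d). -/
theorem interchange_selfdual_pointwise {L : Type*} [DistribLattice L]
    (a b c d : L) (h : (a ⊔ c) ⊓ (b ⊔ d) = (a ⊓ b) ⊔ (c ⊓ d)) :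
    (a ⊓ c) ⊔ (b ⊓ d) = (a ⊔ b) ⊓ (c ⊔ d) := by
  have had : a ⊓ d ≤ (a ⊓ b) ⊔ (c ⊓ d) := by
    rw [← h]
    exact le_inf (inf_le_left.trans le_sup_left) (inf_le_right.trans le_sup_right)
  have hbc : b ⊓ c ≤ (a ⊓ b) ⊔ (c ⊓ d) := by
    rw [← h]
    exact le_inf (inf_le_right.trans le_sup_right) (inf_le_left.trans le_sup_left)
  have h1 : a ⊓ d ≤ (a ⊓ c) ⊔ (b ⊓ d) := by
    have e : a ⊓ d = (a ⊓ d) ⊓ ((a ⊓ b) ⊔ (c ⊓ d)) := (inf_eq_left.mpr had).symm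
    rw [e, inf_sup_left]
    exact sup_le
      ((le_inf (inf_le_right.trans inf_le_right) (inf_le_left.trans inf_le_right)).trans
        le_sup_right)
      ((le_inf (inf_le_left.trans inf_le_left) (inf_le_right.trans inf_le_left)).trans
        le_sup_left)
  have h2 : b ⊓ c ≤ (a ⊓ c) ⊔ (b ⊓ d) := by
    have e : b ⊓ c = (b ⊓ c) ⊓ ((a ⊓ b) ⊔ (c ⊓ d)) := (inf_eq_left.mpr hbc).symm
    rw [e, inf_sup_left]
    exact sup_le
      ((le_inf (inf_le_right.trans inf_le_left) (inf_le_left.trans inf_le_right)).trans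
        le_sup_left)
      ((le_inf (inf_le_left.trans inf_le_left) (inf_le_right.trans inf_le_right)).trans
        le_sup_right)
  apply le_antisymm
  · exact sup_le (le_inf (inf_le_left.trans le_sup_left) (inf_le_right.trans le_sup_left))
      (le_inf (inf_le_left.trans le_sup_right) (inf_le_right.trans le_sup_right))
  · rw [inf_sup_left, inf_sup_right, inf_sup_right]
    exact sup_le (sup_le le_sup_left h2) (sup_le h1 le_sup_right)
end

section
/- Let L be a distributive lattice and x, y ∈ L^n. Then x and y are g-comonotone (the interchange identity holds for every pair of indices) if and only if for every nonempty subset I ⊆ {1,...,n}: ⋀_{i∈I}(x_i ∨ y_i) = (⋀_{i∈I} x_i) ∨ (⋀_{i∈I} y_i). -/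
private lemma inf'_const_inf {L ι : Type*} [DistribLattice L] (s : Finset ι) (hs : s.Nonempty)
    (c : L) (f : ι → L) : s.inf' hs (fun i => c ⊓ f i) = c ⊓ s.inf' hs f := by
  apply le_antisymm
  · obtain ⟨a, ha⟩ := hs
    refine le_inf ((Finset.inf'_le _ ha).trans inf_le_left) ?_
    exact Finset.le_inf' _ _ fun i hi => (Finset.inf'_le _ hi).trans inf_le_right
  · exact Finset.le_inf' _ _ fun i hi => inf_le_inf le_rfl (Finset.inf'_le _ hi)

private lemma claimA {L ι : Type*} [DistribLattice L] (s : Finset ι) (hs : s.Nonempty)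
    (a b : L) (x y : ι → L)
    (h : ∀ i ∈ s, a ⊓ y i ≤ (a ⊓ x i) ⊔ (b ⊓ y i)) :
    a ⊓ s.inf' hs y ≤ (a ⊓ s.inf' hs x) ⊔ (b ⊓ s.inf' hs y) := by
  set X := s.inf' hs x with hX
  set Y := s.inf' hs y with hY
  have key : ∀ i ∈ s, a ⊓ Y ≤ (a ⊓ Y ⊓ x i) ⊔ (a ⊓ b ⊓ Y) := by
    intro i hi
    have hYi : Y ≤ y i := Finset.inf'_le _ hi
    calc a ⊓ Y ≤ (a ⊓ Y) ⊓ ((a ⊓ x i) ⊔ (b ⊓ y i)) := by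
          refine le_inf le_rfl ?_
          exact le_trans (inf_le_inf le_rfl hYi) (h i hi)
      _ = ((a ⊓ Y) ⊓ (a ⊓ x i)) ⊔ ((a ⊓ Y) ⊓ (b ⊓ y i)) := inf_sup_left _ _ _
      _ ≤ (a ⊓ Y ⊓ x i) ⊔ (a ⊓ b ⊓ Y) := by
          apply sup_le_sup
          · exact le_inf inf_le_left (inf_le_right.trans inf_le_right)
          · exact le_inf (le_inf (inf_le_left.trans inf_le_left)
              (inf_le_right.trans inf_le_left)) (inf_le_left.trans inf_le_right)
  have h1 : a ⊓ Y ≤ s.inf' hs (fun i => (a ⊓ Y ⊓ x i) ⊔ (a ⊓ b ⊓ Y)) :=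
    Finset.le_inf' _ _ key
  have h2 : s.inf' hs (fun i => (a ⊓ Y ⊓ x i) ⊔ (a ⊓ b ⊓ Y))
      = s.inf' hs (fun i => a ⊓ Y ⊓ x i) ⊔ (a ⊓ b ⊓ Y) :=
    (Finset.inf'_sup_distrib_right hs _ _).symm
  have h3 : s.inf' hs (fun i => a ⊓ Y ⊓ x i) = a ⊓ Y ⊓ X :=
    inf'_const_inf s hs (a ⊓ Y) x
  calc a ⊓ Y ≤ (a ⊓ Y ⊓ X) ⊔ (a ⊓ b ⊓ Y) := by rw [← h3, ← h2]; exact h1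
    _ ≤ (a ⊓ X) ⊔ (b ⊓ Y) := sup_le_sup
        (le_inf (inf_le_left.trans inf_le_left) inf_le_right)
        (le_inf (inf_le_left.trans inf_le_right) inf_le_right)

theorem gcomonotone_iff_inf_distributes {L : Type*} [DistribLattice L] {n : ℕ}
    (x y : Fin n → L) :
    (∀ i j : Fin n, (x i ⊔ y i) ⊓ (x j ⊔ y j) = (x i ⊓ x j) ⊔ (y i ⊓ y j)) ↔
    (∀ I : Finset (Fin n), ∀ hI : I.Nonempty,
      I.inf' hI (fun i => x i ⊔ y i) = I.inf' hI x ⊔ I.inf' hI y) := by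
  constructor
  · intro h I hI
    induction hI using Finset.Nonempty.cons_induction with
    | singleton i => simp
    | cons a s ha hs ih =>
      rw [Finset.inf'_cons hs, Finset.inf'_cons hs, Finset.inf'_cons hs, ih]
      set X := s.inf' hs x
      set Y := s.inf' hs y
      apply le_antisymm
      · rw [inf_sup_left, inf_sup_right, inf_sup_right]
        have hA : x a ⊓ Y ≤ (x a ⊓ X) ⊔ (y a ⊓ Y) := by
          apply claimA s hs (x a) (y a) x y
          intro i hi
          have := h a i
          calc x a ⊓ y i ≤ (x a ⊔ y a) ⊓ (x i ⊔ y i) :=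
                inf_le_inf le_sup_left le_sup_right
            _ = (x a ⊓ x i) ⊔ (y a ⊓ y i) := h a i
        have hB : y a ⊓ X ≤ (x a ⊓ X) ⊔ (y a ⊓ Y) := by
          have := claimA s hs (y a) (x a) y x (fun i hi => by
            calc y a ⊓ x i ≤ (x a ⊔ y a) ⊓ (x i ⊔ y i) :=
                  inf_le_inf le_sup_right le_sup_left
              _ = (x a ⊓ x i) ⊔ (y a ⊓ y i) := h a i
              _ = (y a ⊓ y i) ⊔ (x a ⊓ x i) := sup_comm _ _)
          exact this.trans (by rw [sup_comm])
        exact sup_le (sup_le le_sup_left hB) (sup_le hA le_sup_right)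
      · exact sup_le (inf_le_inf le_sup_left le_sup_left)
          (inf_le_inf le_sup_right le_sup_right)
  · intro h i j
    have := h (insert i {j}) (Finset.insert_nonempty _ _)
    simpa [Finset.inf'_insert, Finset.inf'_singleton] using this
end

section
/- Let L be a distributive lattice and x, y ∈ L^n. Then x and y are dually g-comonotone if and only if for every nonempty subset I ⊆ {1,...,n}: ⋁_{i∈I}(x_i ∧ y_i) = (⋁_{i∈I} x_i) ∧ (⋁_{i∈I} y_i). -/
theorem dual_gcomonotone_iff_sup_distributes {L : Type*} [DistribLattice L] {n : ℕ}
    (x y : Fin n → L) :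
    (∀ i j : Fin n, (x i ⊓ y i) ⊔ (x j ⊓ y j) = (x i ⊔ x j) ⊓ (y i ⊔ y j)) ↔
    (∀ I : Finset (Fin n), ∀ hI : I.Nonempty,
      I.sup' hI (fun i => x i ⊓ y i) = I.sup' hI x ⊓ I.sup' hI y) := by
  constructor
  · intro h I hI
    apply le_antisymm
    · refine Finset.sup'_le _ _ fun i hi => le_inf ?_ ?_
      · exact inf_le_left.trans (Finset.le_sup' x hi)
      · exact inf_le_right.trans (Finset.le_sup' y hi)
    · rw [Finset.sup'_inf_sup']
      refine Finset.sup'_le _ _ fun p hp => ?_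
      obtain ⟨hp1, hp2⟩ := Finset.mem_product.1 hp
      have : x p.1 ⊓ y p.2 ≤ (x p.1 ⊓ y p.1) ⊔ (x p.2 ⊓ y p.2) := by
        rw [h p.1 p.2]
        exact le_inf (inf_le_left.trans le_sup_left) (inf_le_right.trans le_sup_right)
      exact this.trans (sup_le (Finset.le_sup' (fun i => x i ⊓ y i) hp1) (Finset.le_sup' (fun i => x i ⊓ y i) hp2))
  · intro h i j
    have := h {i, j} ⟨i, by simp⟩
    simpa using this
end

section
/- For every L-valued capacity m on {1,...,n}, the two expressions for the Sugeno integral coincide: ⋁_{I⊆[n]} (m(I) ∧ ⋀_{i∈I} x_i) = ⋀_{I⊆[n]} (m([n]∖I) ∨ ⋁_{i∈I} x_i) for all x ∈ L^n. -/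
theorem sugeno_two_forms {L : Type*} [DistribLattice L] [BoundedOrder L] {n : ℕ}
    (m : Finset (Fin n) → L) (hmono : Monotone m)
    (h0 : m ∅ = ⊥) (h1 : m Finset.univ = ⊤) (x : Fin n → L) :
    (Finset.univ : Finset (Fin n)).powerset.sup (fun I => m I ⊓ I.inf x) =
    (Finset.univ : Finset (Fin n)).powerset.inf
      (fun I => m (Finset.univ \ I) ⊔ I.sup x) := by
  classical
  apply le_antisymm
  · apply Finset.sup_le
    intro I _
    apply Finset.le_inf
    intro J _
    by_cases h : ∃ i ∈ I, i ∈ J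
    · obtain ⟨i, hiI, hiJ⟩ := h
      exact le_trans (inf_le_right.trans ((Finset.inf_le hiI).trans (Finset.le_sup hiJ)))
        le_sup_right
    · have hsub : I ⊆ Finset.univ \ J := by
        intro i hi
        simp only [Finset.mem_sdiff, Finset.mem_univ, true_and]
        exact fun hiJ => h ⟨i, hi, hiJ⟩
      exact le_trans (inf_le_left.trans (hmono hsub)) le_sup_left
  · set t : Finset (Fin n) → Finset (Option (Fin n)) :=
      fun J => insert none (J.image some) with ht
    set f : Finset (Fin n) → Option (Fin n) → L :=
      fun J o => o.elim (m (Finset.univ \ J)) x with hf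
    have key : ∀ J : Finset (Fin n),
        m (Finset.univ \ J) ⊔ J.sup x = (t J).sup (f J) := by
      intro J
      rw [ht, hf, Finset.sup_insert, Finset.sup_image]
      rfl
    rw [Finset.inf_congr rfl (fun J _ => key J), Finset.inf_sup]
    apply Finset.sup_le
    intro g hg
    rw [Finset.mem_pi] at hg
    set I : Finset (Fin n) :=
      Finset.univ.filter
        (fun i => ∃ J, ∃ hJ : J ∈ Finset.univ.powerset, g J hJ = some i) with hI
    have hxi : ∀ i ∈ I, (Finset.univ.powerset.attach.inf
        fun J => f J.1 (g J.1 J.2)) ≤ x i := by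
      intro i hi
      rw [hI, Finset.mem_filter] at hi
      obtain ⟨-, J, hJ, hgJ⟩ := hi
      refine le_trans (Finset.inf_le (Finset.mem_attach Finset.univ.powerset ⟨J, hJ⟩)) ?_
      show f J (g J hJ) ≤ x i
      rw [hgJ]
      exact le_rfl
    have hIc : Finset.univ \ I ∈ Finset.univ.powerset := by simp
    have hnone : g (Finset.univ \ I) hIc = none := by
      cases hcase : g (Finset.univ \ I) hIc with
      | none => rfl
      | some i =>
        exfalso
        have hmem := hg (Finset.univ \ I) hIc
        rw [hcase, ht] at hmem
        simp only [Finset.mem_insert, Finset.mem_image, Option.some_ne_none,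
          false_or] at hmem
        obtain ⟨j, hj, hji⟩ := hmem
        obtain rfl : j = i := Option.some_injective _ hji
        rw [Finset.mem_sdiff] at hj
        exact hj.2 (by rw [hI, Finset.mem_filter]; exact ⟨Finset.mem_univ _,
          Finset.univ \ I, hIc, hcase⟩)
    have hmI : (Finset.univ.powerset.attach.inf
        fun J => f J.1 (g J.1 J.2)) ≤ m I := by
      refine le_trans (Finset.inf_le (Finset.mem_attach Finset.univ.powerset
        ⟨Finset.univ \ I, hIc⟩)) ?_
      show f (Finset.univ \ I) (g (Finset.univ \ I) hIc) ≤ m I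
      rw [hnone]
      show m (Finset.univ \ (Finset.univ \ I)) ≤ m I
      rw [Finset.sdiff_sdiff_self_left, Finset.univ_inter]
    have hIu : I ∈ Finset.univ.powerset := by simp
    exact le_trans (le_inf hmI (Finset.le_inf hxi)) (Finset.le_sup (f := fun I => m I ⊓ I.inf x) hIu)
end

section
/- For every L-valued capacity m, the Sugeno integral Su_m is sup-homogeneous (Su_m(c ∨ x) = c ∨ Su_m(x) for all constants c) and g-comonotone infimal (Su_m(x ∧ y) = Su_m(x) ∧ Su_m(y) for all dually g-comonotone x, y). -/
theorem sugeno_sup_homogeneous_and_gcomonotone_infimal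
    {L : Type*} [DistribLattice L] [BoundedOrder L] {n : ℕ}
    (m : Finset (Fin n) → L) (hmono : Monotone m)
    (h0 : m ∅ = ⊥) (h1 : m Finset.univ = ⊤) :
    (∀ (c : L) (x : Fin n → L),
      (Finset.univ : Finset (Fin n)).powerset.inf
          (fun I => m (Finset.univ \ I) ⊔ I.sup (fun i => c ⊔ x i)) =
        c ⊔ (Finset.univ : Finset (Fin n)).powerset.inf
          (fun I => m (Finset.univ \ I) ⊔ I.sup x)) ∧
    (∀ x y : Fin n → L,
      (∀ i j : Fin n, (x i ⊓ y i) ⊔ (x j ⊓ y j) = (x i ⊔ x j) ⊓ (y i ⊔ y j)) →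
      (Finset.univ : Finset (Fin n)).powerset.inf
          (fun I => m (Finset.univ \ I) ⊔ I.sup (fun i => x i ⊓ y i)) =
        (Finset.univ : Finset (Fin n)).powerset.inf
          (fun I => m (Finset.univ \ I) ⊔ I.sup x) ⊓
        (Finset.univ : Finset (Fin n)).powerset.inf
          (fun I => m (Finset.univ \ I) ⊔ I.sup y)) := by
  constructor
  · intro c x
    rw [Finset.inf_sup_distrib_left]
    apply Finset.inf_congr rfl
    intro I hI
    rcases I.eq_empty_or_nonempty with h | h
    · subst h
      simp [h1]
    · have : I.sup (fun i => c ⊔ x i) = I.sup (fun _ => c) ⊔ I.sup x := by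
        rw [← Finset.sup_sup]; rfl
      rw [this, Finset.sup_const h]
      rw [← sup_assoc, ← sup_assoc, sup_comm (m _) c]
  · intro x y hxy
    apply le_antisymm
    · exact le_inf
        (Finset.inf_mono_fun fun I _ =>
          sup_le_sup_left (Finset.sup_mono_fun fun i _ => inf_le_left) _)
        (Finset.inf_mono_fun fun I _ =>
          sup_le_sup_left (Finset.sup_mono_fun fun i _ => inf_le_right) _)
    · apply Finset.le_inf
      intro I hI
      have hx := Finset.inf_le (f := fun I => m (Finset.univ \ I) ⊔ I.sup x) hI
      have hy := Finset.inf_le (f := fun I => m (Finset.univ \ I) ⊔ I.sup y) hI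
      have key : I.sup x ⊓ I.sup y ≤ I.sup (fun i => x i ⊓ y i) := by
        rw [Finset.sup_inf_distrib_right]
        apply Finset.sup_le
        intro i hi
        rw [Finset.sup_inf_distrib_left]
        apply Finset.sup_le
        intro j hj
        calc x i ⊓ y j ≤ (x i ⊔ x j) ⊓ (y i ⊔ y j) :=
              inf_le_inf le_sup_left le_sup_right
          _ = (x i ⊓ y i) ⊔ (x j ⊓ y j) := (hxy i j).symm
          _ ≤ I.sup (fun i => x i ⊓ y i) :=
              sup_le (Finset.le_sup (f := fun i => x i ⊓ y i) hi) (Finset.le_sup (f := fun i => x i ⊓ y i) hj)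
      calc _ ≤ (m (Finset.univ \ I) ⊔ I.sup x) ⊓ (m (Finset.univ \ I) ⊔ I.sup y) :=
            inf_le_inf hx hy
        _ = m (Finset.univ \ I) ⊔ (I.sup x ⊓ I.sup y) := (sup_inf_left _ _ _).symm
        _ ≤ _ := sup_le_sup_left key _
end

section
/- Let L be a bounded distributive lattice and f: L^n → L an aggregation function. Then f is a discrete Sugeno integral (equal to Su_m for some L-valued capacity m) if and only if f is Boolean sup-homogeneous and Boolean inf-homogeneous (i.e., f(c ∨ x) = c ∨ f(x) and f(c ∧ x) = c ∧ f(x) for all x ∈ {0,1}^n ⊆ L^n and all constant vectors c). -/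
theorem sugeno_iff_boolean_homogeneous {L : Type*} [DistribLattice L] [BoundedOrder L] {n : ℕ}
    (f : (Fin n → L) → L) (hmono : Monotone f)
    (hbot : f (fun _ => ⊥) = ⊥) (htop : f (fun _ => ⊤) = ⊤) :
    (∃ m : Finset (Fin n) → L, Monotone m ∧ m ∅ = ⊥ ∧ m Finset.univ = ⊤ ∧
      ∀ x : Fin n → L,
        f x = (Finset.univ : Finset (Fin n)).powerset.sup (fun I => m I ⊓ I.inf x)) ↔
    ((∀ (c : L) (x : Fin n → L), (∀ i, x i = ⊥ ∨ x i = ⊤) →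
        f (fun i => c ⊔ x i) = c ⊔ f x) ∧
     (∀ (c : L) (x : Fin n → L), (∀ i, x i = ⊥ ∨ x i = ⊤) →
        f (fun i => c ⊓ x i) = c ⊓ f x)) := by
  classical
  constructor
  · rintro ⟨m, hm, hm0, hm1, hrep⟩
    constructor
    · intro c x _
      rw [hrep, hrep]
      apply le_antisymm
      · apply Finset.sup_le
        intro I hI
        have h1 : I.inf (fun i => c ⊔ x i) = c ⊔ I.inf x :=
          (Finset.inf_sup_distrib_left I x c).symm
        rw [h1, inf_sup_left]
        apply sup_le
        · exact le_sup_of_le_left inf_le_right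
        · exact le_sup_of_le_right (Finset.le_sup (f := fun I => m I ⊓ I.inf x) hI)
      · apply sup_le
        · have huniv : (Finset.univ : Finset (Fin n)) ∈
              (Finset.univ : Finset (Fin n)).powerset := Finset.mem_powerset_self _
          refine le_trans ?_ (Finset.le_sup huniv)
          rw [hm1]
          exact le_inf le_top (Finset.le_inf fun i _ => le_sup_left)
        · apply Finset.sup_le
          intro I hI
          exact le_trans (inf_le_inf_left _ (Finset.inf_mono_fun fun i _ => le_sup_right))
            (Finset.le_sup (f := fun I => m I ⊓ I.inf fun i => c ⊔ x i) hI)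
    · intro c x _
      rw [hrep, hrep]
      apply le_antisymm
      · apply Finset.sup_le
        intro I hI
        rcases I.eq_empty_or_nonempty with rfl | hne
        · simp [hm0]
        · obtain ⟨j, hj⟩ := hne
          have h1 : I.inf (fun i => c ⊓ x i) ≤ c :=
            le_trans (Finset.inf_le hj) inf_le_left
          have h2 : I.inf (fun i => c ⊓ x i) ≤ I.inf x :=
            Finset.inf_mono_fun fun i _ => inf_le_right
          exact le_inf (le_trans inf_le_right h1)
            (le_trans (inf_le_inf_left _ h2) (Finset.le_sup (f := fun I => m I ⊓ I.inf x) hI))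
      · rw [Finset.sup_inf_distrib_left]
        apply Finset.sup_le
        intro I hI
        refine le_trans ?_ (Finset.le_sup (f := fun I => m I ⊓ I.inf fun i => c ⊓ x i) hI)
        exact le_inf (le_trans inf_le_right inf_le_left)
          (Finset.le_inf fun i hi => le_inf inf_le_left
            (le_trans inf_le_right (le_trans inf_le_right (Finset.inf_le hi))))
  · rintro ⟨hsup, hinf⟩
    set m : Finset (Fin n) → L := fun I => f (fun i => if i ∈ I then ⊤ else ⊥) with hm_def
    have hbool : ∀ (J : Finset (Fin n)) (i : Fin n),
        (if i ∈ J then (⊤ : L) else ⊥) = ⊥ ∨ (if i ∈ J then (⊤ : L) else ⊥) = ⊤ := by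
      intro J i; by_cases h : i ∈ J <;> simp [h]
    refine ⟨m, ?_, ?_, ?_, ?_⟩
    · intro I J hIJ
      apply hmono
      intro i
      by_cases h : i ∈ I
      · simp [h, hIJ h]
      · simp [h]
    · simp only [hm_def]
      simpa using hbot
    · simp only [hm_def]
      simpa using htop
    · intro x
      apply le_antisymm
      · -- f x ≤ inf over J of (m J ⊔ (univ \ J).sup x), then distribute
        set P := (Finset.univ : Finset (Fin n)).powerset with hP
        set t : Finset (Fin n) → Finset (Option (Fin n)) :=
          fun J => insert none ((Finset.univ \ J).image some) with ht
        set g : Finset (Fin n) → Option (Fin n) → L :=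
          fun J o => o.elim (m J) x with hg
        have step1 : f x ≤ P.inf fun J => (t J).sup (g J) := by
          apply Finset.le_inf
          intro J _
          have hsupJ : (t J).sup (g J) = m J ⊔ (Finset.univ \ J).sup x := by
            rw [ht, Finset.sup_insert, Finset.sup_image]
            rfl
          rw [hsupJ]
          set c := (Finset.univ \ J).sup x with hc
          have h1 := hsup c (fun i => if i ∈ J then ⊤ else ⊥) (hbool J)
          have h2 : f x ≤ f (fun i => c ⊔ if i ∈ J then ⊤ else ⊥) := by
            apply hmono
            intro i
            by_cases h : i ∈ J
            · simp [h]
            · simp only [h, if_neg]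
              exact le_sup_of_le_left (Finset.le_sup (by simp [h]))
          calc f x ≤ f (fun i => c ⊔ if i ∈ J then ⊤ else ⊥) := h2
            _ = c ⊔ m J := h1
            _ = m J ⊔ c := sup_comm _ _
        refine le_trans step1 ?_
        rw [Finset.inf_sup]
        apply Finset.sup_le
        intro p hp
        have hpmem := Finset.mem_pi.mp hp
        set K : Finset (Fin n) :=
          Finset.univ.filter (fun i => ∃ J, ∃ h : J ∈ P, p J h = some i) with hK
        have hKP : K ∈ P := by simp [hP]
        have hnone : p K hKP = none := by
          cases hcase : p K hKP with
          | none => rfl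
          | some i =>
            have h1 : p K hKP ∈ t K := hpmem K hKP
            rw [hcase, ht, Finset.mem_insert] at h1
            rcases h1 with h1 | h1
            · exact absurd h1 (by simp)
            · obtain ⟨j, hj, hj2⟩ := Finset.mem_image.mp h1
              have hji : j = i := Option.some_injective _ hj2
              subst hji
              have : j ∈ K := by
                rw [hK, Finset.mem_filter]
                exact ⟨Finset.mem_univ j, K, hKP, hcase⟩
              rw [Finset.mem_sdiff] at hj
              exact absurd this hj.2
        refine le_trans (le_inf ?_ ?_) (Finset.le_sup (f := fun I => m I ⊓ I.inf x) hKP)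
        · have := Finset.inf_le (Finset.mem_attach P ⟨K, hKP⟩)
            (f := fun (J : {x // x ∈ P}) => g J.1 (p J.1 J.2))
          refine le_trans this (le_of_eq ?_)
          show g K (p K hKP) = m K
          rw [hnone]
          rfl
        · apply Finset.le_inf
          intro i hi
          rw [hK, Finset.mem_filter] at hi
          obtain ⟨-, J, hJ, hpJ⟩ := hi
          have := Finset.inf_le (Finset.mem_attach P ⟨J, hJ⟩)
            (f := fun (J : {x // x ∈ P}) => g J.1 (p J.1 J.2))
          refine le_trans this (le_of_eq ?_)
          show g J (p J hJ) = x i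
          rw [hpJ]
          rfl
      · apply Finset.sup_le
        intro I hI
        set c := I.inf x with hc
        have h1 := hinf c (fun i => if i ∈ I then ⊤ else ⊥) (hbool I)
        have h2 : f (fun i => c ⊓ if i ∈ I then ⊤ else ⊥) ≤ f x := by
          apply hmono
          intro i
          by_cases h : i ∈ I
          · simp only [h, if_pos, inf_top_eq]
            exact Finset.inf_le h
          · simp [h]
        calc m I ⊓ I.inf x = c ⊓ m I := inf_comm _ _
          _ = f (fun i => c ⊓ if i ∈ I then ⊤ else ⊥) := h1.symm
          _ ≤ f x := h2
end
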